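/- Let h : ℝⁿ → ℝ ∪ {∞} be proper, define H(y) := h(y²), suppose H(x) is finite, and let I = {i : xᵢ ≠ 0}. If v is a regular (Fréchet) subgradient of H at x, then the vector v̄ defined by v̄ᵢ = vᵢ for i ∈ I and v̄ᵢ = 0 for i ∉ I is also a regular subgradient of H at x. -/

import Mathlib

open scoped RealInnerProductSpace

/-- Componentwise (Hadamard) product on `EuclideanSpace ℝ (Fin n)`. -/
noncomputable def had {n : ℕ} (x y : EuclideanSpace ℝ (Fin n)) : EuclideanSpace ℝ (Fin n) :=
  (WithLp.equiv 2 (Fin n → ℝ)).symm (fun i => x i * y i)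

def EProper {n : ℕ} (g : EuclideanSpace ℝ (Fin n) → EReal) : Prop :=
  (∃ x, g x ≠ ⊤) ∧ ∀ x, g x ≠ ⊥

/-- Regular (Fréchet) subdifferential:
`v ∈ ∂̂H(x)` iff `H z ≥ H x + ⟨v, z−x⟩ + o(‖z−x‖)` as `z → x`. -/
noncomputable def RegSub {n : ℕ} (H : EuclideanSpace ℝ (Fin n) → EReal)
    (x : EuclideanSpace ℝ (Fin n)) : Set (EuclideanSpace ℝ (Fin n)) :=
  {v | ∀ ε : ℝ, 0 < ε → ∃ δ : ℝ, 0 < δ ∧ ∀ z, ‖z - x‖ < δ →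
    H x + ((⟪v, z - x⟫ - ε * ‖z - x‖ : ℝ) : EReal) ≤ H z}

/-- if `H(y) = h(y²)`, `H(x)` is finite, `I = {i : xᵢ ≠ 0}` and
`v ∈ ∂̂H(x)`, then the truncation `v̄` of `v` (keeping components in `I`, zeroing the rest)
is again a regular subgradient of `H` at `x`. -/
theorem stmt3 {n : ℕ} (h : EuclideanSpace ℝ (Fin n) → EReal) (hproper : EProper h)
    (H : EuclideanSpace ℝ (Fin n) → EReal) (hH : ∀ z, H z = h (had z z))
    (x : EuclideanSpace ℝ (Fin n)) (hfin : H x ≠ ⊤ ∧ H x ≠ ⊥)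
    (v : EuclideanSpace ℝ (Fin n)) (hv : v ∈ RegSub H x)
    (vbar : EuclideanSpace ℝ (Fin n))
    (hvbarI : ∀ i, x i ≠ 0 → vbar i = v i) (hvbarIc : ∀ i, x i = 0 → vbar i = 0) :
    vbar ∈ RegSub H x := by
  intro ε hε
  obtain ⟨δ, hδ, hsub⟩ := hv ε hε
  refine ⟨δ, hδ, fun z hz => ?_⟩
  set z' : EuclideanSpace ℝ (Fin n) :=
    (WithLp.equiv 2 (Fin n → ℝ)).symm
      (fun i => if x i = 0 then (if 0 ≤ v i * z i then z i else -z i) else z i) with hz'def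
  have hz'i : ∀ i, z' i = if x i = 0 then (if 0 ≤ v i * z i then z i else -z i) else z i :=
    fun i => rfl
  -- norms agree
  have hnorm : ‖z' - x‖ = ‖z - x‖ := by
    rw [EuclideanSpace.norm_eq, EuclideanSpace.norm_eq]
    congr 1
    apply Finset.sum_congr rfl
    intro i _
    simp only [PiLp.sub_apply, hz'i]
    by_cases hx : x i = 0
    · by_cases hs : 0 ≤ v i * z i
      · simp [hx, hs]
      · simp [hx, hs]
    · simp [hx]
  -- H z' = H z
  have hHz : H z' = H z := by
    rw [hH, hH]
    congr 1
    apply PiLp.ext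
    intro i
    simp only [had, WithLp.equiv_symm_apply, PiLp.toLp_apply, hz'i]
    by_cases hx : x i = 0
    · by_cases hs : 0 ≤ v i * z i
      · simp [hx, hs]
      · simp [hx, hs]
    · simp [hx]
  -- inner products
  have hinner : ⟪vbar, z - x⟫ ≤ ⟪v, z' - x⟫ := by
    rw [PiLp.inner_apply, PiLp.inner_apply]
    apply Finset.sum_le_sum
    intro i _
    simp only [RCLike.inner_apply, conj_trivial, PiLp.sub_apply, hz'i]
    by_cases hx : x i = 0
    · rw [hvbarIc i hx, mul_zero, hx, sub_zero, if_pos rfl]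
      by_cases hs : 0 ≤ v i * z i
      · rw [if_pos hs]; rw [mul_comm]; exact hs
      · rw [if_neg hs]; nlinarith [not_le.mp hs]
    · rw [hvbarI i hx]
      simp [hx]
  have key := hsub z' (by rw [hnorm]; exact hz)
  rw [hHz, hnorm] at key
  refine le_trans ?_ key
  apply add_le_add_right
  exact EReal.coe_le_coe_iff.mpr (by linarith)
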